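/- Let Φ : ℂ² → ℂ³ be the cross cap, Φ(s,t) = (s², st, t). Then: (i) there is a unique real number ξ with 0 < ξ < 1 and ξ³ + ξ² − 1 = 0; (ii) the intersection of the image Φ(ℂ²) with the membrane H = {(z, (√(1 − |z|²) : ℂ), conj(z)) : z ∈ ℂ, |z| ≤ 1} ⊆ ℂ³ consists of exactly one point, namely (ξ, (ξ·√ξ : ℂ), ξ). -/

import Mathlib

/-- For the cross cap `Φ(s,t) = (s², st, t)`: (i) there is a unique real `ξ ∈ (0,1)`
with `ξ³ + ξ² − 1 = 0`; (ii) the image of `Φ` meets the membrane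
`H = {(z, √(1 − |z|²), conj z) : |z| ≤ 1}` in exactly the point `(ξ, ξ√ξ, ξ)`. -/
theorem stmt_14 (Φ : ℂ × ℂ → ℂ × ℂ × ℂ)
    (hΦ : ∀ s t : ℂ, Φ (s, t) = (s ^ 2, s * t, t)) :
    (∃! ξ : ℝ, 0 < ξ ∧ ξ < 1 ∧ ξ ^ 3 + ξ ^ 2 - 1 = 0) ∧
    ∀ ξ : ℝ, 0 < ξ → ξ < 1 → ξ ^ 3 + ξ ^ 2 - 1 = 0 →
      Set.range Φ ∩
        {y : ℂ × ℂ × ℂ | ∃ z : ℂ, ‖z‖ ≤ 1 ∧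
          y = (z, ((Real.sqrt (1 - ‖z‖ ^ 2) : ℝ) : ℂ), (starRingEnd ℂ) z)} =
      {((ξ : ℂ), ((ξ * Real.sqrt ξ : ℝ) : ℂ), (ξ : ℂ))} := by
  have hexu : ∃! ξ : ℝ, 0 < ξ ∧ ξ < 1 ∧ ξ ^ 3 + ξ ^ 2 - 1 = 0 := by
    obtain ⟨ξ, hξmem, hfξ⟩ : ∃ x ∈ Set.Ioo (0:ℝ) 1, x ^ 3 + x ^ 2 - 1 = 0 := by
      have hc : ContinuousOn (fun x : ℝ => x ^ 3 + x ^ 2 - 1) (Set.Icc 0 1) :=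
        (by continuity : Continuous fun x : ℝ => x ^ 3 + x ^ 2 - 1).continuousOn
      have h := intermediate_value_Ioo (by norm_num : (0:ℝ) ≤ 1) hc
      have h0 : (0:ℝ) ∈ Set.Ioo ((fun x : ℝ => x ^ 3 + x ^ 2 - 1) 0)
          ((fun x : ℝ => x ^ 3 + x ^ 2 - 1) 1) := by norm_num
      obtain ⟨x, hx, hfx⟩ := h h0
      exact ⟨x, hx, hfx⟩
    refine ⟨ξ, ⟨hξmem.1, hξmem.2, hfξ⟩, ?_⟩
    rintro y ⟨hy0, hy1, hyf⟩
    rcases lt_trichotomy y ξ with h | h | h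
    · nlinarith [hξmem.1, hξmem.2, mul_pos hy0 hξmem.1,
        mul_pos (mul_pos hy0 hy0) hξmem.1, mul_pos hy0 (mul_pos hξmem.1 hξmem.1)]
    · exact h
    · nlinarith [hξmem.1, hξmem.2, mul_pos hy0 hξmem.1,
        mul_pos (mul_pos hy0 hy0) hξmem.1, mul_pos hy0 (mul_pos hξmem.1 hξmem.1)]
  refine ⟨hexu, ?_⟩
  intro ξ hξ0 hξ1 hξf
  ext y
  simp only [Set.mem_inter_iff, Set.mem_range, Set.mem_setOf_eq, Set.mem_singleton_iff]
  constructor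
  · rintro ⟨⟨⟨s, t⟩, hst⟩, z, hz1, hy⟩
    rw [hΦ] at hst
    rw [hy] at hst
    obtain ⟨h1, h2, h3⟩ : s ^ 2 = z ∧ s * t = ((Real.sqrt (1 - ‖z‖ ^ 2) : ℝ) : ℂ)
        ∧ t = (starRingEnd ℂ) z := by
      refine ⟨congrArg Prod.fst hst, congrArg (Prod.fst ∘ Prod.snd) hst,
        congrArg (Prod.snd ∘ Prod.snd) hst⟩
    set c : ℝ := Real.sqrt (1 - ‖z‖ ^ 2) with hc
    have hc0 : 0 ≤ c := Real.sqrt_nonneg _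
    -- key equation
    have ht : t = ((starRingEnd ℂ) s) ^ 2 := by rw [h3, ← h1]; simp [map_pow]
    have hkey : ((Complex.normSq s : ℝ) : ℂ) * (starRingEnd ℂ) s = (c : ℂ) := by
      have : s * ((starRingEnd ℂ) s) ^ 2 = (c : ℂ) := by rw [← ht, h2]
      rw [← this]; rw [← Complex.mul_conj]; ring
    have hs0 : s ≠ 0 := by
      rintro rfl
      have hz0 : z = 0 := by rw [← h1]; ring
      have : (c : ℂ) = 0 := by rw [← h2]; ring
      have hcz : c = 0 := by exact_mod_cast this
      rw [hc, hz0] at hcz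
      simp at hcz
    have hns : 0 < Complex.normSq s := Complex.normSq_pos.mpr hs0
    -- c > 0
    have hcpos : 0 < c := by
      rcases hc0.lt_or_eq with h | h
      · exact h
      · exfalso
        have : ((Complex.normSq s : ℝ) : ℂ) * (starRingEnd ℂ) s = 0 := by
          rw [hkey, ← h]; simp
        have := mul_eq_zero.mp this
        rcases this with h' | h'
        · exact hns.ne' (by exact_mod_cast h')
        · exact hs0 (by simpa using congrArg (starRingEnd ℂ) h')
    -- s is real
    set r : ℝ := c / Complex.normSq s with hr
    have hrpos : 0 < r := div_pos hcpos hns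
    have hsr : s = (r : ℂ) := by
      have hconj : (starRingEnd ℂ) s = ((r : ℝ) : ℂ) := by
        rw [hr]
        push_cast
        rw [eq_div_iff (by exact_mod_cast hns.ne' : ((Complex.normSq s : ℝ) : ℂ) ≠ 0)]
        rw [mul_comm]
        exact hkey
      have := congrArg (starRingEnd ℂ) hconj
      simpa [Complex.conj_conj, Complex.conj_ofReal] using this
    have hr3 : r ^ 3 = c := by
      have h' := hkey
      rw [hsr, Complex.normSq_ofReal, Complex.conj_ofReal] at h'
      push_cast at h'
      have h'' : ((r ^ 3 : ℝ) : ℂ) = (c : ℂ) := by push_cast; linear_combination h'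
      exact_mod_cast h''
    have hzr : z = ((r ^ 2 : ℝ) : ℂ) := by rw [← h1, hsr]; push_cast; ring
    have habz : ‖z‖ = r ^ 2 := by
      rw [hzr, Complex.norm_real, Real.norm_eq_abs, abs_of_nonneg (by positivity)]
    have hr41 : r ^ 2 ≤ 1 := by rw [← habz]; exact hz1
    have hc2 : c ^ 2 = 1 - r ^ 4 := by
      rw [hc, habz, Real.sq_sqrt]
      · ring_nf
      · nlinarith
    have hu : (r ^ 2) ^ 3 + (r ^ 2) ^ 2 - 1 = 0 := by nlinarith [hr3]
    have hu1 : r ^ 2 < 1 := by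
      rcases hr41.lt_or_eq with h | h
      · exact h
      · exfalso; nlinarith [hu]
    have huξ : r ^ 2 = ξ := by
      have := hexu.unique ⟨by positivity, hu1, hu⟩ ⟨hξ0, hξ1, hξf⟩
      exact this
    have hcval : c = ξ * Real.sqrt ξ := by
      rw [← hr3, ← huξ, Real.sqrt_sq hrpos.le]; ring
    rw [hy, hzr, huξ, hcval, Complex.conj_ofReal]
  · rintro rfl
    refine ⟨⟨((Real.sqrt ξ : ℝ), (ξ : ℂ)), ?_⟩, (ξ : ℂ), ?_, ?_⟩
    · rw [hΦ]
      have h1 : ((Real.sqrt ξ : ℝ) : ℂ) ^ 2 = (ξ : ℂ) := by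
        rw [← Complex.ofReal_pow, Real.sq_sqrt hξ0.le]
      have h2 : ((Real.sqrt ξ : ℝ) : ℂ) * (ξ : ℂ) = ((ξ * Real.sqrt ξ : ℝ) : ℂ) := by
        push_cast; ring
      rw [h1, h2]
    · rw [Complex.norm_real, Real.norm_eq_abs, abs_of_pos hξ0]; exact hξ1.le
    · have habs : ‖((ξ:ℝ) : ℂ)‖ = ξ := by
        rw [Complex.norm_real, Real.norm_eq_abs, abs_of_pos hξ0]
      have hsq : Real.sqrt (1 - ξ ^ 2) = ξ * Real.sqrt ξ := by
        have : 1 - ξ ^ 2 = ξ ^ 2 * ξ := by nlinarith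
        rw [this, Real.sqrt_mul (sq_nonneg ξ), Real.sqrt_sq hξ0.le]
      rw [habs, hsq, Complex.conj_ofReal]
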